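/- Let k ≥ 1 and x_1,…,x_{2k-1} ∈ [0,1], and let Q(x_1,…,x_{2k-1}) = ℙ[y_i < x_i for at least k indices i], with y_1,…,y_{2k-1} i.i.d. uniform on [0,1]. Then Q(x_1,…,x_{2k-1}) ≥ 2^{-2k+1} · σ_k(x_1,…,x_{2k-1}). -/

import Mathlib

open MeasureTheory

def esymm (m ℓ : ℕ) (x : Fin m → ℝ) : ℝ :=
  ∑ I ∈ Finset.powersetCard ℓ (Finset.univ : Finset (Fin m)), ∏ i ∈ I, x i

/-- `Q k x` is the probability that independent uniform random variables
`y i ∈ [0,1]` satisfy `y i < x i` for at least `k` indices `i`. -/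
noncomputable def Q (k : ℕ) (x : Fin (2*k-1) → ℝ) : ℝ :=
  (volume {y : Fin (2*k-1) → ℝ |
      (∀ i, y i ∈ Set.Icc (0:ℝ) 1) ∧
        k ≤ (Finset.univ.filter (fun i => y i < x i)).card}).toReal

lemma vol_T_le_one (k : ℕ) (x : Fin (2*k-1) → ℝ) :
    volume {y : Fin (2*k-1) → ℝ |
      (∀ i, y i ∈ Set.Icc (0:ℝ) 1) ∧
        k ≤ (Finset.univ.filter (fun i => y i < x i)).card} ≤ 1 := by
  have hsub : {y : Fin (2*k-1) → ℝ |
      (∀ i, y i ∈ Set.Icc (0:ℝ) 1) ∧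
        k ≤ (Finset.univ.filter (fun i => y i < x i)).card} ⊆
      Set.univ.pi (fun _ => Set.Icc (0:ℝ) 1) := by
    intro y hy i _
    exact hy.1 i
  calc volume _ ≤ volume (Set.univ.pi (fun _ : Fin (2*k-1) => Set.Icc (0:ℝ) 1)) :=
        measure_mono hsub
    _ = 1 := by
        rw [volume_pi_pi]
        simp [Real.volume_Icc]

lemma prod_le_Q (k : ℕ) (x : Fin (2*k-1) → ℝ)
    (hx : ∀ i, x i ∈ Set.Icc (0:ℝ) 1)
    (J : Finset (Fin (2*k-1))) (hJ : J.card = k) :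
    ∏ i ∈ J, x i ≤ Q k x := by
  classical
  set T := {y : Fin (2*k-1) → ℝ |
      (∀ i, y i ∈ Set.Icc (0:ℝ) 1) ∧
        k ≤ (Finset.univ.filter (fun i => y i < x i)).card} with hT
  set s : Fin (2*k-1) → Set ℝ := fun i => if i ∈ J then Set.Ico 0 (x i) else Set.Icc 0 1 with hs
  have hvol : volume (Set.univ.pi s) = ENNReal.ofReal (∏ i ∈ J, x i) := by
    rw [volume_pi_pi]
    have : ∀ i, volume (s i) = if i ∈ J then ENNReal.ofReal (x i) else 1 := by
      intro i
      by_cases h : i ∈ J <;> simp [hs, h, Real.volume_Ico, Real.volume_Icc]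
    simp_rw [this]
    rw [Finset.prod_ite_mem, Finset.univ_inter,
      ENNReal.ofReal_prod_of_nonneg (fun i _ => (hx i).1)]
  have hsub : Set.univ.pi s ⊆ T := by
    intro y hy
    have hmem : ∀ i, y i ∈ s i := fun i => hy i (Set.mem_univ i)
    constructor
    · intro i
      have := hmem i
      by_cases h : i ∈ J
      · rw [hs] at this; simp only [h, if_true] at this
        exact ⟨this.1, le_trans (le_of_lt this.2) (hx i).2⟩
      · rw [hs] at this; simpa [h] using this
    · have hJsub : J ⊆ Finset.univ.filter (fun i => y i < x i) := by
        intro i hi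
        have := hmem i
        rw [hs] at this; simp only [hi, if_true] at this
        exact Finset.mem_filter.mpr ⟨Finset.mem_univ i, this.2⟩
      calc k = J.card := hJ.symm
        _ ≤ _ := Finset.card_le_card hJsub
  have hle : ENNReal.ofReal (∏ i ∈ J, x i) ≤ volume T := hvol ▸ measure_mono hsub
  have hfin : volume T ≠ ⊤ :=
    ne_of_lt (lt_of_le_of_lt (vol_T_le_one k x) ENNReal.one_lt_top)
  exact (ENNReal.ofReal_le_iff_le_toReal hfin).mp hle

theorem Q_ge_esymm_div (k : ℕ) (hk : 1 ≤ k) (x : Fin (2*k-1) → ℝ)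
    (hx : ∀ i, x i ∈ Set.Icc (0:ℝ) 1) :
    (2:ℝ)^(-2*(k:ℝ)+1) * esymm (2*k-1) k x ≤ Q k x := by
  have hQ0 : 0 ≤ Q k x := ENNReal.toReal_nonneg
  -- esymm ≤ choose * Q
  have h1 : esymm (2*k-1) k x ≤ ((2*k-1).choose k : ℝ) * Q k x := by
    unfold esymm
    have : ∀ J ∈ Finset.powersetCard k (Finset.univ : Finset (Fin (2*k-1))),
        ∏ i ∈ J, x i ≤ Q k x := by
      intro J hJ
      exact prod_le_Q k x hx J (Finset.mem_powersetCard.mp hJ).2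
    calc _ ≤ ∑ _J ∈ Finset.powersetCard k (Finset.univ : Finset (Fin (2*k-1))), Q k x :=
          Finset.sum_le_sum this
      _ = ((2*k-1).choose k : ℝ) * Q k x := by
          rw [Finset.sum_const, nsmul_eq_mul]
          congr 2
          rw [Finset.card_powersetCard, Finset.card_univ, Fintype.card_fin]
  -- choose ≤ 2^(2k-1)
  have h2 : ((2*k-1).choose k : ℝ) ≤ 2 ^ (2*k-1) := by
    have : (2*k-1).choose k ≤ 2 ^ (2*k-1) := by
      calc (2*k-1).choose k ≤ ∑ i ∈ Finset.range (2*k-1+1), (2*k-1).choose i :=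
            Finset.single_le_sum (fun i _ => Nat.zero_le _)
              (Finset.mem_range.mpr (by omega))
        _ = 2 ^ (2*k-1) := Nat.sum_range_choose (2*k-1)
    calc ((2*k-1).choose k : ℝ) ≤ ((2:ℕ) ^ (2*k-1) : ℕ) := by exact_mod_cast this
      _ = 2 ^ (2*k-1) := by push_cast; ring
  have hpow : (2:ℝ)^(-2*(k:ℝ)+1) = ((2:ℝ) ^ (2*k-1))⁻¹ := by
    have hcast : ((2*k-1 : ℕ) : ℝ) = 2*(k:ℝ) - 1 := by
      have : (1:ℕ) ≤ 2*k := by omega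
      push_cast [this]; ring
    rw [show (-2*(k:ℝ)+1) = -((2*k-1 : ℕ) : ℝ) by rw [hcast]; ring,
      Real.rpow_neg (by norm_num), Real.rpow_natCast]
  rw [hpow, inv_mul_le_iff₀ (by positivity)]
  calc esymm (2*k-1) k x ≤ ((2*k-1).choose k : ℝ) * Q k x := h1
    _ ≤ 2 ^ (2*k-1) * Q k x := by
        exact mul_le_mul_of_nonneg_right h2 hQ0
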